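/- arXiv:1204.1768 — 3 statements merged into one kernel-verified Lean document; each statement's English description precedes it below -/
import Mathlib

section
/- Let f : ℝ³ → ℝ be a C¹ function with compact support. Then the L^{3/2} norm of f is bounded by a universal constant times the L¹ norm of its gradient: ‖f‖_{L^{3/2}(ℝ³)} ≤ C ‖∇f‖_{L¹(ℝ³)}. -/
open MeasureTheory

/-- **Gagliardo–Nirenberg–Sobolev inequality** `‖f‖_{L^{3/2}(ℝ³)} ≤ C ‖∇f‖_{L¹(ℝ³)}`
for `C¹` compactly supported scalar functions on `ℝ³`, with a universal constant `C`. -/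
theorem stmt_0 :
    ∃ C : ℝ, 0 < C ∧
      ∀ f : EuclideanSpace ℝ (Fin 3) → ℝ, ContDiff ℝ 1 f → HasCompactSupport f →
        eLpNorm f (3 / 2) volume ≤
          ENNReal.ofReal C * eLpNorm (fun x => ‖fderiv ℝ f x‖) 1 volume := by
  set p : NNReal := 3 / 2
  set c : NNReal := eLpNormLESNormFDerivOneConst (volume : Measure (EuclideanSpace ℝ (Fin 3))) p
  refine ⟨max c 1, lt_max_of_lt_right one_pos, fun f hf h2f => ?_⟩
  have hp : NNReal.HolderConjugate (Module.finrank ℝ (EuclideanSpace ℝ (Fin 3))) p := by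
    have : Module.finrank ℝ (EuclideanSpace ℝ (Fin 3)) = 3 := by simp
    rw [this]
    constructor
    · rw [← NNReal.coe_inj]
      push_cast [p]
      norm_num
    · norm_num
    · norm_num [p]
  have h := eLpNorm_le_eLpNorm_fderiv_one (volume : Measure (EuclideanSpace ℝ (Fin 3))) hf h2f hp
  have hnorm : eLpNorm (fun x => ‖fderiv ℝ f x‖) 1 volume = eLpNorm (fderiv ℝ f) 1 volume := by
    simp only [eLpNorm_one_eq_lintegral_enorm, enorm_norm]
  have hp32 : ((p : ENNReal)) = 3 / 2 := by
    rw [show p = 3/2 from rfl, ENNReal.coe_div (by norm_num)]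
    norm_num
  calc eLpNorm f (3 / 2) volume = eLpNorm f p volume := by rw [hp32]
    _ ≤ c * eLpNorm (fderiv ℝ f) 1 volume := h
    _ ≤ ENNReal.ofReal (max c 1) * eLpNorm (fun x => ‖fderiv ℝ f x‖) 1 volume := by
        rw [hnorm]
        gcongr
        rw [ENNReal.ofReal_coe_nnreal.symm.trans rfl]
        exact ENNReal.ofReal_le_ofReal (le_max_left _ _)
end

section
/- Let F : ℝ³ → ℝ be a C¹ function with compact support. Then ‖F‖_{L⁶(ℝ³)} ≤ C ‖∇F‖_{L²(ℝ³)} for a universal constant C. -/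
open MeasureTheory
open scoped NNReal ENNReal

/-- **Sobolev inequality** `‖F‖_{L⁶(ℝ³)} ≤ C ‖∇F‖_{L²(ℝ³)}` for `C¹` compactly supported
scalar functions on `ℝ³`, with a universal constant `C`. -/
theorem stmt_1 :
    ∃ C : ℝ, 0 < C ∧
      ∀ F : EuclideanSpace ℝ (Fin 3) → ℝ, ContDiff ℝ 1 F → HasCompactSupport F →
        eLpNorm F 6 volume ≤
          ENNReal.ofReal C * eLpNorm (fun x => ‖fderiv ℝ F x‖) 2 volume := by
  set c : ℝ≥0 := eLpNormLESNormFDerivOfEqInnerConst (volume : Measure (EuclideanSpace ℝ (Fin 3))) 2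
  refine ⟨c + 1, by positivity, fun F hF h2F => ?_⟩
  have hn : 0 < Module.finrank ℝ (EuclideanSpace ℝ (Fin 3)) := by simp
  have hp' : ((6 : NNReal) : ℝ)⁻¹ = ((2 : NNReal) : ℝ)⁻¹
      - (Module.finrank ℝ (EuclideanSpace ℝ (Fin 3)) : ℝ)⁻¹ := by
    simp [finrank_euclideanSpace]
    norm_num
  have h := eLpNorm_le_eLpNorm_fderiv_of_eq_inner (volume : Measure (EuclideanSpace ℝ (Fin 3)))
    hF h2F (p := 2) (p' := 6) one_le_two hn hp'
  have hnorm : eLpNorm (fun x => ‖fderiv ℝ F x‖) 2 volume = eLpNorm (fderiv ℝ F) 2 volume :=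
    eLpNorm_norm _
  rw [hnorm]
  have h6 : ((6 : NNReal) : ℝ≥0∞) = 6 := by norm_num
  have h2 : ((2 : NNReal) : ℝ≥0∞) = 2 := by norm_num
  rw [h6, h2] at h
  refine h.trans ?_
  gcongr
  rw [ENNReal.ofReal_add (by positivity) (by norm_num)]
  exact le_self_add.trans_eq' (by rw [ENNReal.ofReal_coe_nnreal]; simp [c])
end

section
/- In the setting of an ω-parametrized foliation with second fundamental form θ extended by θ(N,·) = 0, the trace identities hold: ∂_ω(tr θ) = tr(∂_ω θ) and tr(∂_ω θ̂) = 0, where θ̂ = θ − (1/2)(tr θ)(g − N⊗N) is the (extended) traceless part. -/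
noncomputable section

/-- Local chart of the Riemannian 3-manifold `Σ`. -/
abbrev E3 := EuclideanSpace ℝ (Fin 3)
/-- Riemannian metrics on the chart. -/
abbrev Met := E3 → E3 →L[ℝ] E3 →L[ℝ] ℝ

lemma euc_expand (v : E3) : v = ∑ i : Fin 3, v i • EuclideanSpace.single i (1:ℝ) := by
  ext j
  have : (∑ i : Fin 3, v i • EuclideanSpace.single i (1:ℝ)) j
      = ∑ i : Fin 3, (v i • EuclideanSpace.single i (1:ℝ)) j :=
    by rw [WithLp.ofLp_sum]; exact Finset.sum_apply j Finset.univ _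
  rw [this]
  simp [EuclideanSpace.single_apply]

lemma bilin_expand (B : E3 →L[ℝ] E3 →L[ℝ] ℝ) (v w : E3) :
    B v w = ∑ i : Fin 3, ∑ j : Fin 3,
      v i * w j * B (EuclideanSpace.single i 1) (EuclideanSpace.single j 1) := by
  conv_lhs => rw [euc_expand v, euc_expand w]
  simp only [map_sum, map_smul, ContinuousLinearMap.sum_apply, ContinuousLinearMap.smul_apply,
    smul_eq_mul, Finset.mul_sum]
  rw [Finset.sum_comm]
  exact Finset.sum_congr rfl fun i _ => Finset.sum_congr rfl fun j _ => by ring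

/-- The derivative in `ω` of a `ω`-dependent bilinear form applied to `ω`-dependent vectors,
raw coordinate form. -/
lemma hasDerivAt_bilin_aux (θ : ℝ → E3 →L[ℝ] E3 →L[ℝ] ℝ)
    (hθ : ∀ v w, Differentiable ℝ (fun ω => θ ω v w))
    (f h : ℝ → E3) (f' h' : E3) (ω₀ : ℝ)
    (hf : HasDerivAt f f' ω₀) (hh : HasDerivAt h h' ω₀) :
    HasDerivAt (fun ω => θ ω (f ω) (h ω))
      (∑ i : Fin 3, ∑ j : Fin 3,
        ((f' i * h ω₀ j + f ω₀ i * h' j)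
            * θ ω₀ (EuclideanSpace.single i 1) (EuclideanSpace.single j 1)
          + f ω₀ i * h ω₀ j
            * deriv (fun ω => θ ω (EuclideanSpace.single i 1) (EuclideanSpace.single j 1)) ω₀)) ω₀ := by
  have hfun : (fun ω => θ ω (f ω) (h ω)) = fun ω => ∑ i : Fin 3, ∑ j : Fin 3,
      f ω i * h ω j * θ ω (EuclideanSpace.single i 1) (EuclideanSpace.single j 1) := by
    funext ω; exact bilin_expand (θ ω) (f ω) (h ω)
  rw [hfun]
  apply HasDerivAt.fun_sum
  intro i _
  apply HasDerivAt.fun_sum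
  intro j _
  have hfi : HasDerivAt (fun ω => f ω i) (f' i) ω₀ :=
    (EuclideanSpace.proj i (𝕜 := ℝ)).hasFDerivAt.comp_hasDerivAt ω₀ hf
  have hhj : HasDerivAt (fun ω => h ω j) (h' j) ω₀ :=
    (EuclideanSpace.proj j (𝕜 := ℝ)).hasFDerivAt.comp_hasDerivAt ω₀ hh
  have hθij : HasDerivAt (fun ω => θ ω (EuclideanSpace.single i 1) (EuclideanSpace.single j 1))
      (deriv (fun ω => θ ω (EuclideanSpace.single i 1) (EuclideanSpace.single j 1)) ω₀) ω₀ :=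
    (hθ _ _ ω₀).hasDerivAt
  exact (hfi.mul hhj).mul hθij

/-- Product rule: `∂_ω (θ(ω)(f ω, h ω)) = (∂_ω θ)(f, h) + θ(∂_ω f, h) + θ(f, ∂_ω h)`. -/
lemma hasDerivAt_bilin (θ : ℝ → E3 →L[ℝ] E3 →L[ℝ] ℝ)
    (hθ : ∀ v w, Differentiable ℝ (fun ω => θ ω v w))
    (f h : ℝ → E3) (f' h' : E3) (ω₀ : ℝ)
    (hf : HasDerivAt f f' ω₀) (hh : HasDerivAt h h' ω₀) :
    HasDerivAt (fun ω => θ ω (f ω) (h ω))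
      (deriv (fun ω => θ ω (f ω₀) (h ω₀)) ω₀ + θ ω₀ f' (h ω₀) + θ ω₀ (f ω₀) h') ω₀ := by
  have hmain := hasDerivAt_bilin_aux θ hθ f h f' h' ω₀ hf hh
  have hfrozen := hasDerivAt_bilin_aux θ hθ (fun _ => f ω₀) (fun _ => h ω₀) 0 0 ω₀
    (hasDerivAt_const ω₀ _) (hasDerivAt_const ω₀ _)
  have hder : deriv (fun ω => θ ω (f ω₀) (h ω₀)) ω₀
      = ∑ i : Fin 3, ∑ j : Fin 3, f ω₀ i * h ω₀ j
          * deriv (fun ω => θ ω (EuclideanSpace.single i 1) (EuclideanSpace.single j 1)) ω₀ := by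
    have := hfrozen.deriv
    simpa using this
  have hsplit : (∑ i : Fin 3, ∑ j : Fin 3,
        ((f' i * h ω₀ j + f ω₀ i * h' j)
            * θ ω₀ (EuclideanSpace.single i 1) (EuclideanSpace.single j 1)
          + f ω₀ i * h ω₀ j
            * deriv (fun ω => θ ω (EuclideanSpace.single i 1) (EuclideanSpace.single j 1)) ω₀))
      = deriv (fun ω => θ ω (f ω₀) (h ω₀)) ω₀ + θ ω₀ f' (h ω₀) + θ ω₀ (f ω₀) h' := by
    rw [hder, bilin_expand (θ ω₀) f' (h ω₀), bilin_expand (θ ω₀) (f ω₀) h']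
    rw [← Finset.sum_add_distrib, ← Finset.sum_add_distrib]
    refine Finset.sum_congr rfl fun i _ => ?_
    rw [← Finset.sum_add_distrib, ← Finset.sum_add_distrib]
    exact Finset.sum_congr rfl fun j _ => by ring
  rw [← hsplit]
  exact hmain

/-- **Trace identities for `∂_ω θ`.**  In an `ω`-parametrized foliation of a Riemannian
3-manifold `Σ` (metric `g` independent of `ω`), with unit normal `N(ω)`, `g`-orthonormal
frames `e(ω) 0, e(ω) 1, e(ω) 2 = N(ω)` adapted to the leaves, and second fundamental form
`θ(ω)` extended to `Σ` by `θ(N, ·) = θ(·, N) = 0` (symmetric), the trace identities hold: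
`∂_ω(tr θ) = tr(∂_ω θ)` and `tr(∂_ω θ̂) = 0`, where
`θ̂ = θ − (1/2)(tr θ)(g − N ⊗ N)` is the (extended) traceless part, and the traces are
taken over the two leaf directions of the frame at `ω₀`. -/
theorem stmt_15
    (g : Met)
    (hg_symm : ∀ x v w, g x v w = g x w v)
    (hg_pos : ∀ x v, v ≠ 0 → 0 < g x v v)
    (N : ℝ → E3 → E3) (e : ℝ → Fin 3 → E3 → E3)
    (θ : ℝ → E3 → E3 →L[ℝ] E3 →L[ℝ] ℝ)
    (hθ_symm : ∀ ω x v w, θ ω x v w = θ ω x w v)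
    -- the trivial extension `θ(N,·) = 0`
    (hθN : ∀ ω x v, θ ω x (N ω x) v = 0)
    -- `g`-orthonormal frames adapted to the foliation, `e(ω) 2 = N(ω)`
    (horth : ∀ ω i j x, g x (e ω i x) (e ω j x) = if i = j then 1 else 0)
    (he2 : ∀ ω, e ω 2 = N ω)
    -- smoothness in `ω`
    (hθ_diff : ∀ x v w, Differentiable ℝ (fun ω => θ ω x v w))
    (he_diff : ∀ i x, Differentiable ℝ (fun ω => e ω i x))
    (hN_diff : ∀ x, Differentiable ℝ (fun ω => N ω x))
    (ω₀ : ℝ) :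
    ∀ x,
      -- `∂_ω(tr θ) = tr(∂_ω θ)`
      (deriv (fun ω => ∑ A : Fin 2, θ ω x (e ω A.castSucc x) (e ω A.castSucc x)) ω₀
        = ∑ A : Fin 2, deriv (fun ω => θ ω x (e ω₀ A.castSucc x) (e ω₀ A.castSucc x)) ω₀)
      ∧
      -- `tr(∂_ω θ̂) = 0` for `θ̂ = θ − (1/2)(tr θ)(g − N ⊗ N)`
      ((∑ A : Fin 2, deriv (fun ω =>
          θ ω x (e ω₀ A.castSucc x) (e ω₀ A.castSucc x)
            - (1 / 2) * (∑ B : Fin 2, θ ω x (e ω B.castSucc x) (e ω B.castSucc x))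
              * (g x (e ω₀ A.castSucc x) (e ω₀ A.castSucc x)
                - g x (e ω₀ A.castSucc x) (N ω x) * g x (e ω₀ A.castSucc x) (N ω x))) ω₀)
        = 0) := by
  intro x
  -- frame derivatives
  set d : Fin 3 → E3 := fun i => deriv (fun ω => e ω i x) ω₀ with hdd
  have hd : ∀ i : Fin 3, HasDerivAt (fun ω => e ω i x) (d i) ω₀ :=
    fun i => (he_diff i x ω₀).hasDerivAt
  -- skew-symmetry of the connection coefficients
  have hskew : ∀ i j : Fin 3, g x (d i) (e ω₀ j x) + g x (d j) (e ω₀ i x) = 0 := by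
    intro i j
    have h1 : HasDerivAt (fun ω => g x (e ω i x) (e ω j x))
        (deriv (fun ω => g x (e ω₀ i x) (e ω₀ j x)) ω₀
          + g x (d i) (e ω₀ j x) + g x (e ω₀ i x) (d j)) ω₀ :=
      hasDerivAt_bilin (fun _ => g x) (fun v w => differentiable_const _) _ _ _ _ ω₀ (hd i) (hd j)
    have h2 : (fun ω => g x (e ω i x) (e ω j x)) = fun _ : ℝ => (if i = j then (1:ℝ) else 0) := by
      funext ω; exact horth ω i j x
    have h3 : HasDerivAt (fun ω => g x (e ω i x) (e ω j x)) 0 ω₀ := by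
      rw [h2]; exact hasDerivAt_const _ _
    have h4 := h1.unique h3
    have h5 : deriv (fun _ : ℝ => g x (e ω₀ i x) (e ω₀ j x)) ω₀ = 0 := deriv_const _ _
    rw [hg_symm x (e ω₀ i x) (d j)] at h4
    rw [h5] at h4
    linarith
  -- the frame at `ω₀` is a `g`-orthonormal basis; expansion of vectors
  have hbasis : ∀ u : E3, u = ∑ j : Fin 3, g x u (e ω₀ j x) • e ω₀ j x := by
    have hli : LinearIndependent ℝ (fun i : Fin 3 => e ω₀ i x) := by
      rw [linearIndependent_iff']
      intro s f hsum i hi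
      have h := congrArg (fun u : E3 => g x u (e ω₀ i x)) hsum
      simp only [map_sum, map_smul, ContinuousLinearMap.sum_apply, ContinuousLinearMap.smul_apply,
        smul_eq_mul, map_zero, ContinuousLinearMap.zero_apply] at h
      simp only [horth, mul_ite, mul_one, mul_zero, Finset.sum_ite_eq', hi, if_true] at h
      exact h
    have hcard : Fintype.card (Fin 3) = Module.finrank ℝ E3 := by
      simp [finrank_euclideanSpace_fin]
    let B := basisOfLinearIndependentOfCardEqFinrank hli hcard
    have hB : ⇑B = fun i : Fin 3 => e ω₀ i x :=
      coe_basisOfLinearIndependentOfCardEqFinrank hli hcard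
    intro u
    have hrepr := B.sum_repr u
    have hco : ∀ i, B.repr u i = g x u (e ω₀ i x) := by
      intro i
      conv_rhs => rw [← hrepr]
      simp only [map_sum, map_smul, ContinuousLinearMap.sum_apply, ContinuousLinearMap.smul_apply,
        smul_eq_mul, hB]
      simp only [horth, mul_ite, mul_one, mul_zero, Finset.sum_ite_eq', Finset.mem_univ, if_true]
    conv_lhs => rw [← hrepr]
    refine Finset.sum_congr rfl fun i _ => ?_
    rw [hco i, hB]
  -- θ kills the normal direction at ω₀
  have hθv2l : ∀ u : E3, θ ω₀ x (e ω₀ 2 x) u = 0 := by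
    intro u; rw [he2]; exact hθN ω₀ x u
  -- expansion of θ applied to frame derivatives
  have hθd : ∀ (i : Fin 3) (u : E3),
      θ ω₀ x (d i) u = ∑ j : Fin 3, g x (d i) (e ω₀ j x) * θ ω₀ x (e ω₀ j x) u := by
    intro i u
    conv_lhs => rw [hbasis (d i)]
    simp only [map_sum, map_smul, ContinuousLinearMap.sum_apply, ContinuousLinearMap.smul_apply,
      smul_eq_mul]
  -- the correction terms cancel
  have hzero : ∑ A : Fin 2, (θ ω₀ x (d A.castSucc) (e ω₀ A.castSucc x)
      + θ ω₀ x (e ω₀ A.castSucc x) (d A.castSucc)) = 0 := by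
    rw [Fin.sum_univ_two]
    rw [show ((0:Fin 2).castSucc) = (0:Fin 3) from rfl, show ((1:Fin 2).castSucc) = (1:Fin 3) from rfl]
    rw [hθ_symm ω₀ x (e ω₀ 0 x) (d 0), hθ_symm ω₀ x (e ω₀ 1 x) (d 1)]
    rw [hθd 0 (e ω₀ 0 x), hθd 1 (e ω₀ 1 x)]
    rw [Fin.sum_univ_three, Fin.sum_univ_three]
    rw [hθv2l (e ω₀ 0 x), hθv2l (e ω₀ 1 x)]
    have hs00 := hskew 0 0
    have hs11 := hskew 1 1
    have hs01 := hskew 0 1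
    have hts := hθ_symm ω₀ x (e ω₀ 0 x) (e ω₀ 1 x)
    linear_combination (θ ω₀ x (e ω₀ 0 x) (e ω₀ 0 x)) * hs00
      + (θ ω₀ x (e ω₀ 1 x) (e ω₀ 1 x)) * hs11
      + 2 * (θ ω₀ x (e ω₀ 1 x) (e ω₀ 0 x)) * hs01
      + 2 * (g x (d 1) (e ω₀ 0 x)) * hts
  -- derivative of the moving trace
  have hsum1 : HasDerivAt
      (fun ω => ∑ A : Fin 2, θ ω x (e ω A.castSucc x) (e ω A.castSucc x))
      (∑ A : Fin 2, (deriv (fun ω => θ ω x (e ω₀ A.castSucc x) (e ω₀ A.castSucc x)) ω₀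
        + θ ω₀ x (d A.castSucc) (e ω₀ A.castSucc x)
        + θ ω₀ x (e ω₀ A.castSucc x) (d A.castSucc))) ω₀ := by
    apply HasDerivAt.fun_sum
    intro A _
    exact hasDerivAt_bilin (fun ω => θ ω x) (hθ_diff x) _ _ _ _ ω₀ (hd _) (hd _)
  have hval : (∑ A : Fin 2, (deriv (fun ω => θ ω x (e ω₀ A.castSucc x) (e ω₀ A.castSucc x)) ω₀
        + θ ω₀ x (d A.castSucc) (e ω₀ A.castSucc x)
        + θ ω₀ x (e ω₀ A.castSucc x) (d A.castSucc)))
      = ∑ A : Fin 2, deriv (fun ω => θ ω x (e ω₀ A.castSucc x) (e ω₀ A.castSucc x)) ω₀ := by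
    rw [show (∑ A : Fin 2, (deriv (fun ω => θ ω x (e ω₀ A.castSucc x) (e ω₀ A.castSucc x)) ω₀
        + θ ω₀ x (d A.castSucc) (e ω₀ A.castSucc x)
        + θ ω₀ x (e ω₀ A.castSucc x) (d A.castSucc)))
      = ∑ A : Fin 2, (deriv (fun ω => θ ω x (e ω₀ A.castSucc x) (e ω₀ A.castSucc x)) ω₀
        + (θ ω₀ x (d A.castSucc) (e ω₀ A.castSucc x)
          + θ ω₀ x (e ω₀ A.castSucc x) (d A.castSucc)))
      from Finset.sum_congr rfl fun A _ => by ring]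
    rw [Finset.sum_add_distrib, hzero, add_zero]
  have part1 : deriv (fun ω => ∑ A : Fin 2, θ ω x (e ω A.castSucc x) (e ω A.castSucc x)) ω₀
      = ∑ A : Fin 2, deriv (fun ω => θ ω x (e ω₀ A.castSucc x) (e ω₀ A.castSucc x)) ω₀ := by
    rw [hsum1.deriv, hval]
  refine ⟨part1, ?_⟩
  -- Part 2
  have hS : HasDerivAt
      (fun ω => ∑ B : Fin 2, θ ω x (e ω B.castSucc x) (e ω B.castSucc x))
      (∑ A : Fin 2, deriv (fun ω => θ ω x (e ω₀ A.castSucc x) (e ω₀ A.castSucc x)) ω₀) ω₀ := by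
    rw [← hval]; exact hsum1
  have hcast2 : ∀ A : Fin 2, (A.castSucc : Fin 3) ≠ 2 := by decide
  have hdF : ∀ A : Fin 2,
      deriv (fun ω =>
          θ ω x (e ω₀ A.castSucc x) (e ω₀ A.castSucc x)
            - (1 / 2) * (∑ B : Fin 2, θ ω x (e ω B.castSucc x) (e ω B.castSucc x))
              * (g x (e ω₀ A.castSucc x) (e ω₀ A.castSucc x)
                - g x (e ω₀ A.castSucc x) (N ω x) * g x (e ω₀ A.castSucc x) (N ω x))) ω₀
      = deriv (fun ω => θ ω x (e ω₀ A.castSucc x) (e ω₀ A.castSucc x)) ω₀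
        - (1 / 2) * (∑ B : Fin 2, deriv (fun ω => θ ω x (e ω₀ B.castSucc x) (e ω₀ B.castSucc x)) ω₀) := by
    intro A
    have hgaa : g x (e ω₀ A.castSucc x) (e ω₀ A.castSucc x) = 1 := by
      rw [horth]; simp
    have hgaN : g x (e ω₀ A.castSucc x) (N ω₀ x) = 0 := by
      rw [← he2 ω₀, horth]
      simp [hcast2 A]
    have hT : HasDerivAt (fun ω => θ ω x (e ω₀ A.castSucc x) (e ω₀ A.castSucc x))
        (deriv (fun ω => θ ω x (e ω₀ A.castSucc x) (e ω₀ A.castSucc x)) ω₀) ω₀ :=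
      (hθ_diff x _ _ ω₀).hasDerivAt
    have hn : HasDerivAt (fun ω => g x (e ω₀ A.castSucc x) (N ω x))
        (g x (e ω₀ A.castSucc x) (deriv (fun ω => N ω x) ω₀)) ω₀ :=
      (g x (e ω₀ A.castSucc x)).hasFDerivAt.comp_hasDerivAt ω₀ (hN_diff x ω₀).hasDerivAt
    have hQ : HasDerivAt (fun ω => g x (e ω₀ A.castSucc x) (e ω₀ A.castSucc x)
          - g x (e ω₀ A.castSucc x) (N ω x) * g x (e ω₀ A.castSucc x) (N ω x))
        (0 - (g x (e ω₀ A.castSucc x) (deriv (fun ω => N ω x) ω₀)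
              * g x (e ω₀ A.castSucc x) (N ω₀ x)
            + g x (e ω₀ A.castSucc x) (N ω₀ x)
              * g x (e ω₀ A.castSucc x) (deriv (fun ω => N ω x) ω₀))) ω₀ :=
      (hasDerivAt_const _ _).sub (hn.mul hn)
    have hF := hT.sub ((hS.const_mul ((1:ℝ)/2)).mul hQ)
    exact hF.deriv.trans (by rw [hgaN, hgaa]; ring)
  rw [Fin.sum_univ_two, hdF 0, hdF 1, Fin.sum_univ_two]
  ring
end
end
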